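/- Let MSS(seq, r) denote the minimum, over all ways of selecting r entries from the integer sequence seq with no two selected entries adjacent, of the sum of the selected entries. Let seq1 = (3,…,3 [a copies], 1, 3, 3, 3,…,3 [b copies]) and seq2 = (3,…,3 [a copies], 2, 3, 2, 3,…,3 [b copies]). Then MSS(seq1, 1) = 1 ≠ 2 = MSS(seq2, 1), and for every x with 2 ≤ x ≤ (a+b+4)/2, MSS(seq1, x) = MSS(seq2, x). -/

import Mathlib

/-- `MSS seq r`: the minimum, over all ways of selecting `r` entries of `seq` with no two
selected entries adjacent, of the sum of the selected entries (0-indexed positions). -/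
noncomputable def MSS (seq : List ℕ) (r : ℕ) : ℕ :=
  sInf { t | ∃ S : Finset ℕ, (∀ i ∈ S, i < seq.length) ∧ S.card = r ∧
    (∀ i ∈ S, i + 1 ∉ S) ∧ t = ∑ i ∈ S, seq.getD i 0 }


lemma sInf_eq_of_mem_of_le {A : Set ℕ} {lb : ℕ} (h1 : lb ∈ A) (h2 : ∀ t ∈ A, lb ≤ t) :
    sInf A = lb :=
  le_antisymm (Nat.sInf_le h1) (h2 _ (Nat.sInf_mem ⟨lb, h1⟩))

/-- An independent (no two consecutive) finset contained in `[lo, lo+2n)` has at most `n`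
elements. -/
lemma indep_card_le {T : Finset ℕ} (hind : ∀ i ∈ T, i + 1 ∉ T) {lo n : ℕ}
    (hbd : ∀ i ∈ T, lo ≤ i ∧ i < lo + 2 * n) : T.card ≤ n := by
  classical
  have : T.card ≤ (Finset.range n).card := by
    apply Finset.card_le_card_of_injOn (fun i => (i - lo) / 2)
    · intro i hi
      have := hbd i hi
      simp only [Finset.coe_range, Set.mem_Iio, Finset.mem_coe, Finset.mem_range]
      omega
    · intro i hi j hj hij
      have hbi := hbd i hi
      have hbj := hbd j hj
      simp only at hij
      rcases lt_trichotomy i j with h | h | h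
      · have : j = i + 1 := by omega
        exact absurd (this ▸ hj) (hind i hi)
      · exact h
      · have : i = j + 1 := by omega
        exact absurd (this ▸ hi) (hind j hj)
  simpa using this

lemma getD_replicate' (n k v : ℕ) (h : k < n) : (List.replicate n v).getD k 0 = v := by
  rw [List.getD_eq_getElem _ _ (by simpa using h)]; simp

/-- Entries of seq1. -/
lemma getD_seq1 (a b i : ℕ) (hi : i < a + b + 3) :
    (List.replicate a 3 ++ 1 :: 3 :: 3 :: List.replicate b 3).getD i 0
      = if i = a then 1 else 3 := by
  rcases lt_or_ge i a with h | h
  · rw [List.getD_append _ _ _ _ (by simpa using h), getD_replicate' _ _ _ h]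
    simp [Nat.ne_of_lt h]
  · rw [List.getD_append_right _ _ _ _ (by simpa using h)]
    simp only [List.length_replicate]
    rcases Nat.lt_or_ge (i - a) 3 with h3 | h3
    · have : i - a = 0 ∨ i - a = 1 ∨ i - a = 2 := by omega
      rcases this with h0 | h0 | h0 <;> rw [h0]
      · have : i = a := by omega
        simp [this]
      · have : i ≠ a := by omega
        simp [this]
      · have : i ≠ a := by omega
        simp [this]
    · have hia : i ≠ a := by omega
      simp only [hia, if_false]
      obtain ⟨j, hj⟩ : ∃ j, i - a = j + 3 := ⟨i - a - 3, by omega⟩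
      rw [hj]
      show (List.replicate b 3).getD j 0 = 3
      exact getD_replicate' _ _ _ (by omega)

lemma getD_seq2 (a b i : ℕ) (hi : i < a + b + 3) :
    (List.replicate a 3 ++ 2 :: 3 :: 2 :: List.replicate b 3).getD i 0
      = if i = a then 2 else if i = a + 2 then 2 else 3 := by
  rcases lt_or_ge i a with h | h
  · rw [List.getD_append _ _ _ _ (by simpa using h), getD_replicate' _ _ _ h]
    have h1 : i ≠ a := by omega
    have h2 : i ≠ a + 2 := by omega
    simp [h1, h2]
  · rw [List.getD_append_right _ _ _ _ (by simpa using h)]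
    simp only [List.length_replicate]
    rcases Nat.lt_or_ge (i - a) 3 with h3 | h3
    · have : i - a = 0 ∨ i - a = 1 ∨ i - a = 2 := by omega
      rcases this with h0 | h0 | h0 <;> rw [h0]
      · have : i = a := by omega
        simp [this]
      · have h1 : i ≠ a := by omega
        have h2 : i ≠ a + 2 := by omega
        simp [h1, h2]
      · have h1 : i ≠ a := by omega
        have h2 : i = a + 2 := by omega
        simp [h1, h2]
    · have h1 : i ≠ a := by omega
      have h2 : i ≠ a + 2 := by omega
      simp only [h1, h2, if_false]
      obtain ⟨j, hj⟩ : ∃ j, i - a = j + 3 := ⟨i - a - 3, by omega⟩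
      rw [hj]
      show (List.replicate b 3).getD j 0 = 3
      exact getD_replicate' _ _ _ (by omega)

lemma sum_seq1 (a b : ℕ) (S : Finset ℕ) (hS : ∀ i ∈ S, i < a + b + 3) :
    (∑ i ∈ S, (List.replicate a 3 ++ 1 :: 3 :: 3 :: List.replicate b 3).getD i 0)
      + 2 * (if a ∈ S then 1 else 0) = 3 * S.card := by
  classical
  have h1 : ∑ i ∈ S, (List.replicate a 3 ++ 1 :: 3 :: 3 :: List.replicate b 3).getD i 0
      = ∑ i ∈ S, (if i = a then 1 else 3) :=
    Finset.sum_congr rfl fun i hi => getD_seq1 a b i (hS i hi)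
  have h2 : 2 * (if a ∈ S then (1:ℕ) else 0) = ∑ i ∈ S, (if i = a then 2 else 0) := by
    rw [Finset.sum_ite_eq' S a fun _ => (2:ℕ)]
    split_ifs <;> ring
  rw [h1, h2, ← Finset.sum_add_distrib]
  have h3 : ∀ i ∈ S, ((if i = a then (1:ℕ) else 3) + (if i = a then 2 else 0)) = 3 := by
    intro i _; split_ifs <;> rfl
  rw [Finset.sum_congr rfl h3, Finset.sum_const, smul_eq_mul, mul_comm]

lemma sum_seq2 (a b : ℕ) (S : Finset ℕ) (hS : ∀ i ∈ S, i < a + b + 3) :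
    (∑ i ∈ S, (List.replicate a 3 ++ 2 :: 3 :: 2 :: List.replicate b 3).getD i 0)
      + (if a ∈ S then 1 else 0) + (if a + 2 ∈ S then 1 else 0) = 3 * S.card := by
  classical
  have h1 : ∑ i ∈ S, (List.replicate a 3 ++ 2 :: 3 :: 2 :: List.replicate b 3).getD i 0
      = ∑ i ∈ S, (if i = a then 2 else if i = a + 2 then 2 else 3) :=
    Finset.sum_congr rfl fun i hi => getD_seq2 a b i (hS i hi)
  have h2 : (if a ∈ S then (1:ℕ) else 0) = ∑ i ∈ S, (if i = a then 1 else 0) :=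
    (Finset.sum_ite_eq' S a fun _ => (1:ℕ)).symm
  have h2' : (if a + 2 ∈ S then (1:ℕ) else 0) = ∑ i ∈ S, (if i = a + 2 then 1 else 0) :=
    (Finset.sum_ite_eq' S (a + 2) fun _ => (1:ℕ)).symm
  rw [h1, h2, h2', ← Finset.sum_add_distrib, ← Finset.sum_add_distrib]
  have h3 : ∀ i ∈ S, ((if i = a then (2:ℕ) else if i = a + 2 then 2 else 3)
      + (if i = a then 1 else 0) + (if i = a + 2 then 1 else 0)) = 3 := by
    intro i _; split_ifs <;> omega
  rw [Finset.sum_congr rfl h3, Finset.sum_const, smul_eq_mul, mul_comm]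

lemma card_split (S : Finset ℕ) (v : ℕ) (hv : v ∈ S) :
    S.card = (S.filter (· < v)).card + (S.filter (v < ·)).card + 1 := by
  classical
  have h0 : (S.filter (· < v)).card + (S.filter (¬ · < v)).card = S.card :=
    Finset.card_filter_add_card_filter_not _
  have h1 : S.filter (¬ · < v) = insert v (S.filter (v < ·)) := by
    ext i
    simp only [Finset.mem_filter, Finset.mem_insert]
    constructor
    · rintro ⟨hi, h⟩
      rcases Nat.lt_or_ge v i with h' | h'
      · exact Or.inr ⟨hi, h'⟩
      · exact Or.inl (by omega)
    · rintro (rfl | ⟨hi, h⟩)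
      · exact ⟨hv, by omega⟩
      · exact ⟨hi, by omega⟩
  have h2 : v ∉ S.filter (v < ·) := by simp
  rw [h1, Finset.card_insert_of_notMem h2] at h0
  omega

/-- if `a ∈ S` then `|S| ≤ 2 + a/2 + b/2`. -/
lemma ub_a (a b : ℕ) {S : Finset ℕ} (hS : ∀ i ∈ S, i < a + b + 3)
    (hind : ∀ i ∈ S, i + 1 ∉ S) (hv : a ∈ S) : S.card ≤ 2 + a / 2 + b / 2 := by
  classical
  have hL : (S.filter (· < a)).card ≤ a / 2 := by
    apply indep_card_le (lo := 0) (n := a / 2)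
    · intro i hi hi1
      exact hind i (Finset.mem_filter.1 hi).1
        (by rcases Finset.mem_filter.1 hi1 with ⟨h, _⟩; exact h)
    · intro i hi
      obtain ⟨hiS, hilt⟩ := Finset.mem_filter.1 hi
      have : i + 1 ≠ a := fun h => hind i hiS (h ▸ hv)
      omega
  have hR : (S.filter (a < ·)).card ≤ b / 2 + 1 := by
    apply indep_card_le (lo := a + 2) (n := b / 2 + 1)
    · intro i hi hi1
      exact hind i (Finset.mem_filter.1 hi).1
        (by rcases Finset.mem_filter.1 hi1 with ⟨h, _⟩; exact h)
    · intro i hi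
      obtain ⟨hiS, hilt⟩ := Finset.mem_filter.1 hi
      have h1 : i ≠ a + 1 := fun h => hind a hv (h ▸ hiS)
      have h2 := hS i hiS
      omega
  have := card_split S a hv
  omega

/-- if `a + 2 ∈ S` then `|S| ≤ 2 + a/2 + b/2`. -/
lemma ub_a2 (a b : ℕ) {S : Finset ℕ} (hS : ∀ i ∈ S, i < a + b + 3)
    (hind : ∀ i ∈ S, i + 1 ∉ S) (hv : a + 2 ∈ S) : S.card ≤ 2 + a / 2 + b / 2 := by
  classical
  have hL : (S.filter (· < a + 2)).card ≤ a / 2 + 1 := by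
    apply indep_card_le (lo := 0) (n := a / 2 + 1)
    · intro i hi hi1
      exact hind i (Finset.mem_filter.1 hi).1
        (by rcases Finset.mem_filter.1 hi1 with ⟨h, _⟩; exact h)
    · intro i hi
      obtain ⟨hiS, hilt⟩ := Finset.mem_filter.1 hi
      have : i + 1 ≠ a + 2 := fun h => hind i hiS (h ▸ hv)
      omega
  have hR : (S.filter (a + 2 < ·)).card ≤ b / 2 := by
    apply indep_card_le (lo := a + 4) (n := b / 2)
    · intro i hi hi1
      exact hind i (Finset.mem_filter.1 hi).1
        (by rcases Finset.mem_filter.1 hi1 with ⟨h, _⟩; exact h)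
    · intro i hi
      obtain ⟨hiS, hilt⟩ := Finset.mem_filter.1 hi
      have h1 : i ≠ a + 3 := fun h => hind (a + 2) hv (h ▸ hiS)
      have h2 := hS i hiS
      omega
  have := card_split S (a + 2) hv
  omega

/-- construction of an optimal selection containing `a` (and `a+2` when `x ≥ 2`). -/
lemma construct (a b x : ℕ) (hx1 : 1 ≤ x) (hxT : x ≤ 2 + a / 2 + b / 2) :
    ∃ S : Finset ℕ, (∀ i ∈ S, i < a + b + 3) ∧ S.card = x ∧ (∀ i ∈ S, i + 1 ∉ S) ∧
      a ∈ S ∧ (2 ≤ x → a + 2 ∈ S) := by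
  classical
  obtain ⟨p, q, hpq, h2p, h2q, hq1⟩ :
      ∃ p q : ℕ, x = 1 + p + q ∧ 2 * p ≤ a ∧ 2 * q ≤ b + 2 ∧ (2 ≤ x → 1 ≤ q) :=
    ⟨x - 1 - min (x - 1) (b / 2 + 1), min (x - 1) (b / 2 + 1), by omega, by omega,
      by omega, by omega⟩
  refine ⟨(Finset.range x).image (fun i => a - 2 * p + 2 * i), ?_, ?_, ?_, ?_, ?_⟩
  · intro i hi
    obtain ⟨j, hj, rfl⟩ := Finset.mem_image.1 hi
    have := Finset.mem_range.1 hj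
    omega
  · rw [Finset.card_image_of_injective _ (fun i j h => by omega), Finset.card_range]
  · intro i hi hi1
    obtain ⟨j, hj, rfl⟩ := Finset.mem_image.1 hi
    obtain ⟨k, hk, hke⟩ := Finset.mem_image.1 hi1
    omega
  · exact Finset.mem_image.2 ⟨p, Finset.mem_range.2 (by omega), by omega⟩
  · intro hx2
    exact Finset.mem_image.2 ⟨p + 1, Finset.mem_range.2 (by omega), by omega⟩

lemma len_seq1 (a b : ℕ) :
    (List.replicate a 3 ++ 1 :: 3 :: 3 :: List.replicate b 3).length = a + b + 3 := by
  simp; omega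

lemma len_seq2 (a b : ℕ) :
    (List.replicate a 3 ++ 2 :: 3 :: 2 :: List.replicate b 3).length = a + b + 3 := by
  simp; omega

lemma base_set (a b x : ℕ) (hmax : 2 * x ≤ a + b + 4) :
    ∃ S : Finset ℕ, (∀ i ∈ S, i < a + b + 3) ∧ S.card = x ∧ (∀ i ∈ S, i + 1 ∉ S) := by
  refine ⟨(Finset.range x).image (fun i => 2 * i), ?_, ?_, ?_⟩
  · intro i hi
    obtain ⟨j, hj, rfl⟩ := Finset.mem_image.1 hi
    have := Finset.mem_range.1 hj
    omega
  · rw [Finset.card_image_of_injective _ (fun i j h => by omega), Finset.card_range]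
  · intro i hi hi1
    obtain ⟨j, hj, rfl⟩ := Finset.mem_image.1 hi
    obtain ⟨k, hk, hke⟩ := Finset.mem_image.1 hi1
    omega

lemma mss1_eval (a b x : ℕ) (hx : 1 ≤ x) (hmax : 2 * x ≤ a + b + 4) :
    MSS (List.replicate a 3 ++ 1 :: 3 :: 3 :: List.replicate b 3) x
      = if x ≤ 2 + a / 2 + b / 2 then 3 * x - 2 else 3 * x := by
  classical
  unfold MSS
  simp only [len_seq1]
  split_ifs with hT
  · apply sInf_eq_of_mem_of_le
    · obtain ⟨S, h1, h2, h3, h4, _⟩ := construct a b x hx hT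
      refine ⟨S, h1, h2, h3, ?_⟩
      have hsum := sum_seq1 a b S h1
      rw [if_pos h4, h2] at hsum
      omega
    · rintro t ⟨S, h1, h2, h3, rfl⟩
      have hsum := sum_seq1 a b S h1
      rw [h2] at hsum
      split_ifs at hsum <;> omega
  · have hnS : ∀ S : Finset ℕ, (∀ i ∈ S, i < a + b + 3) → S.card = x →
        (∀ i ∈ S, i + 1 ∉ S) → a ∉ S :=
      fun S h1 h2 h3 haS => hT (h2 ▸ ub_a a b h1 h3 haS)
    apply sInf_eq_of_mem_of_le
    · obtain ⟨S, h1, h2, h3⟩ := base_set a b x hmax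
      refine ⟨S, h1, h2, h3, ?_⟩
      have hsum := sum_seq1 a b S h1
      rw [if_neg (hnS S h1 h2 h3), h2] at hsum
      omega
    · rintro t ⟨S, h1, h2, h3, rfl⟩
      have hsum := sum_seq1 a b S h1
      rw [if_neg (hnS S h1 h2 h3), h2] at hsum
      omega

lemma mss2_eval (a b x : ℕ) (hx : 2 ≤ x) (hmax : 2 * x ≤ a + b + 4) :
    MSS (List.replicate a 3 ++ 2 :: 3 :: 2 :: List.replicate b 3) x
      = if x ≤ 2 + a / 2 + b / 2 then 3 * x - 2 else 3 * x := by
  classical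
  unfold MSS
  simp only [len_seq2]
  split_ifs with hT
  · apply sInf_eq_of_mem_of_le
    · obtain ⟨S, h1, h2, h3, h4, h5⟩ := construct a b x (by omega) hT
      refine ⟨S, h1, h2, h3, ?_⟩
      have hsum := sum_seq2 a b S h1
      rw [if_pos h4, if_pos (h5 hx), h2] at hsum
      omega
    · rintro t ⟨S, h1, h2, h3, rfl⟩
      have hsum := sum_seq2 a b S h1
      rw [h2] at hsum
      split_ifs at hsum <;> omega
  · have hnS : ∀ S : Finset ℕ, (∀ i ∈ S, i < a + b + 3) → S.card = x →
        (∀ i ∈ S, i + 1 ∉ S) → a ∉ S :=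
      fun S h1 h2 h3 haS => hT (h2 ▸ ub_a a b h1 h3 haS)
    have hnS2 : ∀ S : Finset ℕ, (∀ i ∈ S, i < a + b + 3) → S.card = x →
        (∀ i ∈ S, i + 1 ∉ S) → a + 2 ∉ S :=
      fun S h1 h2 h3 haS => hT (h2 ▸ ub_a2 a b h1 h3 haS)
    apply sInf_eq_of_mem_of_le
    · obtain ⟨S, h1, h2, h3⟩ := base_set a b x hmax
      refine ⟨S, h1, h2, h3, ?_⟩
      have hsum := sum_seq2 a b S h1
      rw [if_neg (hnS S h1 h2 h3), if_neg (hnS2 S h1 h2 h3), h2] at hsum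
      omega
    · rintro t ⟨S, h1, h2, h3, rfl⟩
      have hsum := sum_seq2 a b S h1
      rw [if_neg (hnS S h1 h2 h3), if_neg (hnS2 S h1 h2 h3), h2] at hsum
      omega

lemma mss2_one (a b : ℕ) :
    MSS (List.replicate a 3 ++ 2 :: 3 :: 2 :: List.replicate b 3) 1 = 2 := by
  classical
  unfold MSS
  simp only [len_seq2]
  apply sInf_eq_of_mem_of_le
  · refine ⟨{a}, ?_, Finset.card_singleton a, ?_, ?_⟩
    · intro i hi
      rw [Finset.mem_singleton] at hi
      omega
    · intro i hi
      rw [Finset.mem_singleton] at hi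
      subst hi
      rw [Finset.mem_singleton]
      omega
    · rw [Finset.sum_singleton, getD_seq2 a b a (by omega), if_pos rfl]
  · rintro t ⟨S, h1, h2, h3, rfl⟩
    have hsum := sum_seq2 a b S h1
    rw [h2] at hsum
    have hboth : ¬(a ∈ S ∧ a + 2 ∈ S) := by
      rintro ⟨ha, ha2⟩
      have hsub : ({a, a + 2} : Finset ℕ) ⊆ S := by
        intro i hi
        rcases Finset.mem_insert.1 hi with rfl | hi
        · exact ha
        · rw [Finset.mem_singleton] at hi; subst hi; exact ha2
      have hc : ({a, a + 2} : Finset ℕ).card = 2 := by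
        rw [Finset.card_insert_of_notMem (by simp), Finset.card_singleton]
      have := Finset.card_le_card hsub
      omega
    split_ifs at hsum with h h'
    · exact absurd ⟨h, h'⟩ hboth
    · omega
    · omega
    · omega

/-- For `seq1 = (3^a, 1, 3, 3, 3^b)` and `seq2 = (3^a, 2, 3, 2, 3^b)`,
we have `MSS(seq1,1) = 1 ≠ 2 = MSS(seq2,1)`, while for every `2 ≤ x ≤ (a+b+4)/2`,
`MSS(seq1,x) = MSS(seq2,x)`. -/
theorem mss_pair_distinguishable_only_at_one (a b : ℕ) :
    let seq1 : List ℕ := List.replicate a 3 ++ 1 :: 3 :: 3 :: List.replicate b 3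
    let seq2 : List ℕ := List.replicate a 3 ++ 2 :: 3 :: 2 :: List.replicate b 3
    MSS seq1 1 = 1 ∧ MSS seq2 1 = 2 ∧
      ∀ x : ℕ, 2 ≤ x → x ≤ (a + b + 4) / 2 → MSS seq1 x = MSS seq2 x := by
  refine ⟨?_, mss2_one a b, ?_⟩
  · rw [mss1_eval a b 1 le_rfl (by omega), if_pos (by omega)]
  · intro x hx2 hxmax
    have hmax : 2 * x ≤ a + b + 4 := by omega
    rw [mss1_eval a b x (by omega) hmax, mss2_eval a b x hx2 hmax]
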